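/- Let λ denote Lebesgue measure on [0,1] and let X : [0,1] → [0,1] be Borel measurable. Suppose there exists a sequence of Borel measurable functions Z_n : [0,1] → ℝ taking values in {−1, 1} such that for every Borel measurable W : [0,1] → [0,1], ‖E[Z_n · W | σ(X)]‖_{L²(λ)} → 0 as n → ∞. Then for μ_X-a.e. x, the measure ν(x) is atomless. -/

import Mathlib

open MeasureTheory ProbabilityTheory Filter
open scoped ENNReal Topology

local notation "I01" => Set.Icc (0:ℝ) 1

/-- Let `λ` be Lebesgue measure on `[0,1]` (the volume measure on the
subtype `[0,1] ⊆ ℝ`) and `X : [0,1] → [0,1]` Borel measurable.  Let `μ_{X,Y}` be the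
pushforward of `λ` under `t ↦ (X t, t)` and `ν = μ_{X,Y}.condKernel`.  If there are Borel
`Z_n : [0,1] → {−1,1}` such that `‖E[Z_n · W | σ(X)]‖_{L²(λ)} → 0` for every Borel
`W : [0,1] → [0,1]`, then `ν x` is atomless for `μ_X`-a.e. `x`. -/
theorem conditional_mixing_implies_diffuse_fibers
    (X : ↥I01 → ↥I01) (hX : Measurable X)
    (μXY : Measure (↥I01 × ↥I01)) [IsProbabilityMeasure μXY]
    (hμXY : μXY = Measure.map (fun t => (X t, t)) volume)
    (h5 : ∃ Z : ℕ → ↥I01 → ℝ,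
      (∀ n, Measurable (Z n)) ∧
      (∀ n t, Z n t = 1 ∨ Z n t = -1) ∧
      ∀ W : ↥I01 → ↥I01, Measurable W →
        Tendsto (fun n =>
            eLpNorm
              ((volume : Measure ↥I01)[(fun t => Z n t * (W t : ℝ)) |
                MeasurableSpace.comap X inferInstance]) 2 volume)
          atTop (𝓝 0)) :
    ∀ᵐ x ∂(Measure.map X volume), ∀ y : ↥I01, μXY.condKernel x {y} = 0 := by
  classical
  obtain ⟨Z, hZm, hZv, hZt⟩ := h5
  set ν := μXY.condKernel with hν
  have hνcd : condDistrib id X (volume : Measure ↥I01) = ν := by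
    rw [hν]; subst hμXY; rw [condDistrib_def]; rfl
  have habs : ∀ n t, |Z n t| = 1 := by
    intro n t; rcases hZv n t with h | h <;> simp [h]
  -- Step A : for every measurable set `s`, the squared L² norm of
  -- `x ↦ ∫ y in s, Z n y ∂ν x` tends to 0.
  have hA : ∀ s : Set ↥I01, MeasurableSet s →
      Tendsto (fun n => ∫⁻ x, (‖∫ y in s, Z n y ∂ν x‖₊ : ℝ≥0∞)^2
        ∂(Measure.map X volume)) atTop (𝓝 0) := by
    intro s hs
    set g : ℕ → ↥I01 → ℝ := fun n x => ∫ y in s, Z n y ∂ν x with hg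
    have hgm : ∀ n, StronglyMeasurable (g n) := by
      intro n
      have h2 := MeasureTheory.StronglyMeasurable.integral_kernel_prod_right' (κ := ν)
        (f := fun p : ↥I01 × ↥I01 => s.indicator (Z n) p.2)
        (((hZm n).indicator hs).stronglyMeasurable.comp_measurable measurable_snd)
      have h1 : (fun x => ∫ y, s.indicator (Z n) y ∂ν x) = g n := by
        funext x; rw [integral_indicator hs]
      rwa [h1] at h2
    set W : ↥I01 → ↥I01 := fun t => if t ∈ s then ⟨1, by norm_num⟩ else ⟨0, by norm_num⟩
      with hWdef
    have hW : Measurable W := Measurable.ite hs measurable_const measurable_const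
    have hWcoe : ∀ n y, Z n y * (W y : ℝ) = s.indicator (Z n) y := by
      intro n y; by_cases h : y ∈ s <;> simp [hWdef, h]
    have hfm : ∀ n, StronglyMeasurable fun y => Z n y * (W y : ℝ) :=
      fun n => ((hZm n).mul (measurable_subtype_coe.comp hW)).stronglyMeasurable
    have hint : ∀ n, Integrable (fun t => Z n t * (W t : ℝ)) (volume : Measure ↥I01) := by
      intro n
      refine Integrable.mono' (integrable_const 1) (hfm n).aestronglyMeasurable
        (ae_of_all _ fun t => ?_)
      rw [norm_mul, Real.norm_eq_abs, Real.norm_eq_abs, habs n t, one_mul,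
        abs_of_nonneg (W t).2.1]
      exact (W t).2.2
    have hcond : ∀ n, (volume : Measure ↥I01)[(fun t => Z n t * (W t : ℝ)) |
        MeasurableSpace.comap X inferInstance] =ᵐ[volume] fun t => g n (X t) := by
      intro n
      have h0 := condExp_ae_eq_integral_condDistrib (μ := (volume : Measure ↥I01)) hX
        aemeasurable_id (f := fun y => Z n y * (W y : ℝ)) (hfm n) (hint n)
      simp only [id_eq] at h0
      rw [hνcd] at h0
      refine h0.trans (ae_of_all _ fun a => ?_)
      simp only []
      rw [show (fun y => Z n y * (W y : ℝ)) = s.indicator (Z n) from funext fun y => hWcoe n y]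
      rw [integral_indicator hs]
    have hEq : ∀ n, ∫⁻ x, (‖g n x‖₊ : ℝ≥0∞)^2 ∂(Measure.map X volume)
        = (eLpNorm ((volume : Measure ↥I01)[(fun t => Z n t * (W t : ℝ)) |
            MeasurableSpace.comap X inferInstance]) 2 volume)^2 := by
      intro n
      rw [lintegral_map (((hgm n).measurable.nnnorm).coe_nnreal_ennreal.pow_const 2) hX]
      rw [eLpNorm_congr_ae (hcond n)]
      rw [eLpNorm_eq_lintegral_rpow_enorm two_ne_zero (by norm_num)]
      simp only [enorm_eq_nnnorm]
      rw [← ENNReal.rpow_natCast _ 2, ← ENNReal.rpow_mul]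
      norm_num
    refine Tendsto.congr (fun n => (hEq n).symm) ?_
    have h2 := ENNReal.Tendsto.pow (n := 2) (hZt W hW)
    simpa using h2
  -- Step B : the key pointwise bound.
  have hkey : ∀ (n : ℕ) (s : Set ↥I01), MeasurableSet s → ∀ (x : ↥I01), ∀ y ∈ s,
      2 * ν x {y} ≤ ν x s + (‖∫ t in s, Z n t ∂ν x‖₊ : ℝ≥0∞) := by
    intro n s hs x y hy
    set ρ : Measure ↥I01 := ν x with hρdef
    have hρy : ρ {y} ≠ ∞ := measure_ne_top _ _
    have hρs : ρ s ≠ ∞ := measure_ne_top _ _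
    have hyle : ρ {y} ≤ ρ s := measure_mono (Set.singleton_subset_iff.2 hy)
    have hint : Integrable (Z n) ρ := by
      refine Integrable.mono' (integrable_const 1) (hZm n).aestronglyMeasurable
        (ae_of_all _ fun t => ?_)
      rw [Real.norm_eq_abs, habs n t]
    have hsplit : ∫ t in s, Z n t ∂ρ
        = (∫ t in {y}, Z n t ∂ρ) + ∫ t in s \ {y}, Z n t ∂ρ := by
      rw [← setIntegral_union (Set.disjoint_sdiff_right.mono_left le_rfl)
        (hs.diff (measurableSet_singleton y)) hint.integrableOn hint.integrableOn,
        Set.union_diff_cancel (Set.singleton_subset_iff.2 hy)]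
    have h2 : |∫ t in {y}, Z n t ∂ρ| = (ρ {y}).toReal := by
      rw [integral_singleton, smul_eq_mul, abs_mul, habs n y, mul_one,
        abs_of_nonneg measureReal_nonneg, measureReal_def]
    have h3 : |∫ t in s \ {y}, Z n t ∂ρ| ≤ (ρ s).toReal - (ρ {y}).toReal := by
      have h := norm_setIntegral_le_of_norm_le_const (C := 1) (μ := ρ) (s := s \ {y})
        (measure_lt_top _ _) (fun t _ => by rw [Real.norm_eq_abs, habs n t])
      rw [Real.norm_eq_abs, one_mul] at h
      refine h.trans (le_of_eq ?_)
      rw [measureReal_def, measure_diff (Set.singleton_subset_iff.2 hy)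
        (measurableSet_singleton y).nullMeasurableSet hρy,
        ENNReal.toReal_sub_of_le hyle hρs]
    have hreal : 2 * (ρ {y}).toReal ≤ (ρ s).toReal + |∫ t in s, Z n t ∂ρ| := by
      set a := ∫ t in {y}, Z n t ∂ρ
      set b := ∫ t in s \ {y}, Z n t ∂ρ
      have tri : |a| ≤ |a + b| + |b| := by
        have := abs_add_le (a + b) (-b); simpa using this
      rw [hsplit]
      linarith [h2, h3, tri]
    calc 2 * ρ {y} = ENNReal.ofReal (2 * (ρ {y}).toReal) := by
          rw [ENNReal.ofReal_mul (by norm_num), ENNReal.ofReal_toReal hρy]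
          norm_num
      _ ≤ ENNReal.ofReal ((ρ s).toReal + |∫ t in s, Z n t ∂ρ|) :=
          ENNReal.ofReal_le_ofReal hreal
      _ = ρ s + (‖∫ t in s, Z n t ∂ρ‖₊ : ℝ≥0∞) := by
          rw [ENNReal.ofReal_add ENNReal.toReal_nonneg (abs_nonneg _),
            ENNReal.ofReal_toReal hρs, ← Real.enorm_eq_ofReal_abs, enorm_eq_nnnorm]
  -- joint measurability of `(x, y) ↦ ν x {y}`
  have hdiag : Measurable fun p : ↥I01 × ↥I01 => ν p.1 {p.2} := by
    have ht : MeasurableSet {q : (↥I01 × ↥I01) × ↥I01 | q.2 = q.1.2} :=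
      MeasureTheory.StronglyMeasurable.measurableSet_eq_fun
        measurable_snd.stronglyMeasurable measurable_fst.snd.stronglyMeasurable
    let K : Kernel (↥I01 × ↥I01) ↥I01 := ν.comap Prod.fst measurable_fst
    have h := ProbabilityTheory.Kernel.measurable_kernel_prodMk_left (κ := K) ht
    have heq : ∀ a : ↥I01 × ↥I01,
        K a (Prod.mk a ⁻¹' {q : (↥I01 × ↥I01) × ↥I01 | q.2 = q.1.2}) = ν a.1 {a.2} := by
      intro a
      rw [Kernel.comap_apply]
      congr 1
    simp only [heq] at h; exact h
  -- measurability of the inner lintegral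
  have hFm : ∀ s : Set ↥I01, MeasurableSet s →
      Measurable fun x => ∫⁻ y in s, (2 * ν x {y} - ν x s)^2 ∂ν x := by
    intro s hs
    have hF : Measurable fun p : ↥I01 × ↥I01 =>
        if p.2 ∈ s then (2 * ν p.1 {p.2} - ν p.1 s)^2 else 0 := by
      refine Measurable.ite (measurable_snd hs) ?_ measurable_const
      exact ((hdiag.const_mul 2).sub
        ((Kernel.measurable_coe ν hs).comp measurable_fst)).pow_const 2
    have h := hF.lintegral_kernel_prod_right' (κ := ν)
    have heq : (fun x => ∫⁻ y, (if y ∈ s then (2 * ν x {y} - ν x s)^2 else 0) ∂ν x)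
        = fun x => ∫⁻ y in s, (2 * ν x {y} - ν x s)^2 ∂ν x := by
      funext x
      rw [← lintegral_indicator hs]
      refine lintegral_congr fun y => ?_
      simp [Set.indicator_apply]
    rwa [heq] at h
  -- Step C : the diagonal-defect integral vanishes.
  have hB : ∀ s : Set ↥I01, MeasurableSet s →
      ∫⁻ x, (∫⁻ y in s, (2 * ν x {y} - ν x s)^2 ∂ν x) ∂(Measure.map X volume) = 0 := by
    intro s hs
    refine le_antisymm ?_ zero_le
    refine ge_of_tendsto (hA s hs) (Eventually.of_forall fun n => ?_)
    refine lintegral_mono fun x => ?_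
    calc ∫⁻ y in s, (2 * ν x {y} - ν x s)^2 ∂ν x
        ≤ ∫⁻ _ in s, (‖∫ t in s, Z n t ∂ν x‖₊ : ℝ≥0∞)^2 ∂ν x := by
          refine setLIntegral_mono' hs fun y hy => ?_
          refine pow_le_pow_left₀ zero_le ?_ 2
          refine tsub_le_iff_right.2 ?_
          rw [add_comm]
          exact hkey n s hs x y hy
      _ = (‖∫ t in s, Z n t ∂ν x‖₊ : ℝ≥0∞)^2 * ν x s := setLIntegral_const _ _
      _ ≤ (‖∫ t in s, Z n t ∂ν x‖₊ : ℝ≥0∞)^2 * 1 :=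
          mul_le_mul_right prob_le_one _
      _ = (‖∫ t in s, Z n t ∂ν x‖₊ : ℝ≥0∞)^2 := mul_one _
  -- the dyadic intervals
  set Iset : ℕ → ℕ → Set ↥I01 :=
    fun m j => {t : ↥I01 | ((j:ℝ) - 1)/2^m < (t:ℝ) ∧ (t:ℝ) ≤ (j:ℝ)/2^m} with hIset
  have hImeas : ∀ m j, MeasurableSet (Iset m j) := by
    intro m j
    have : Iset m j = (fun t : ↥I01 => (t:ℝ)) ⁻¹'
        (Set.Ioc (((j:ℝ) - 1)/2^m) ((j:ℝ)/2^m)) := rfl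
    rw [this]; exact measurable_subtype_coe measurableSet_Ioc
  have hae1 : ∀ᵐ x ∂(Measure.map X volume), ∀ m j : ℕ,
      ∫⁻ y in Iset m j, (2 * ν x {y} - ν x (Iset m j))^2 ∂ν x = 0 := by
    rw [ae_all_iff]; intro m; rw [ae_all_iff]; intro j
    have h := (lintegral_eq_zero_iff (hFm _ (hImeas m j))).mp (hB _ (hImeas m j))
    filter_upwards [h] with x hx using hx
  filter_upwards [hae1] with x hx
  have hae2 : ∀ᵐ y ∂ν x, ∀ m j : ℕ,
      y ∈ Iset m j → 2 * ν x {y} ≤ ν x (Iset m j) := by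
    rw [ae_all_iff]; intro m; rw [ae_all_iff]; intro j
    have hm : Measurable fun y => (2 * ν x {y} - ν x (Iset m j))^2 := by
      have h1 : Measurable fun y : ↥I01 => ν x {y} := hdiag.comp measurable_prodMk_left
      exact ((h1.const_mul 2).sub measurable_const).pow_const 2
    have h1 := (lintegral_eq_zero_iff hm).mp (hx m j)
    have h2 := (ae_restrict_iff' (hImeas m j)).mp h1
    filter_upwards [h2] with y hy hmem
    have h3 := hy hmem
    simp only [Pi.zero_apply] at h3
    rw [pow_eq_zero_iff two_ne_zero] at h3
    exact tsub_eq_zero_iff_le.mp h3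
  intro y
  by_cases hGy : ∀ m j : ℕ, y ∈ Iset m j → 2 * ν x {y} ≤ ν x (Iset m j)
  · -- endgame : shrink dyadic intervals to the point y
    set J : ℕ → Set ↥I01 :=
      fun m => {t : ↥I01 | (y:ℝ) - (1/2)^m < (t:ℝ) ∧ (t:ℝ) ≤ (y:ℝ) + (1/2)^m} with hJ
    have hJmeas : ∀ m, MeasurableSet (J m) := by
      intro m
      have : J m = (fun t : ↥I01 => (t:ℝ)) ⁻¹'
          (Set.Ioc ((y:ℝ) - (1/2)^m) ((y:ℝ) + (1/2)^m)) := rfl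
      rw [this]; exact measurable_subtype_coe measurableSet_Ioc
    have hJanti : Antitone J := by
      intro m m' h t ht
      have hpow : (1/2:ℝ)^m' ≤ (1/2)^m :=
        pow_le_pow_of_le_one (by norm_num) (by norm_num) h
      exact ⟨by linarith [ht.1], by linarith [ht.2]⟩
    have hJinter : ⋂ m, J m = {y} := by
      ext t
      simp only [Set.mem_iInter, Set.mem_singleton_iff, hJ, Set.mem_setOf_eq]
      constructor
      · intro h
        have h1 : (t:ℝ) ≤ (y:ℝ) := by
          refine le_of_forall_pos_le_add fun ε hε => ?_
          obtain ⟨m, hm⟩ := exists_pow_lt_of_lt_one hε (by norm_num : (1/2:ℝ) < 1)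
          linarith [(h m).2]
        have h2 : (y:ℝ) ≤ (t:ℝ) := by
          refine le_of_forall_pos_le_add fun ε hε => ?_
          obtain ⟨m, hm⟩ := exists_pow_lt_of_lt_one hε (by norm_num : (1/2:ℝ) < 1)
          linarith [(h m).1]
        exact Subtype.ext (le_antisymm h1 h2)
      · rintro rfl m
        have : (0:ℝ) < (1/2)^m := by positivity
        exact ⟨by linarith, by linarith⟩
    have hmem : ∀ m : ℕ, ∃ j : ℕ, y ∈ Iset m j ∧ Iset m j ⊆ J m := by
      intro m
      have h2m : (0:ℝ) < 2^m := by positivity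
      set c : ℝ := (y:ℝ) * 2^m with hc
      have hc0 : 0 ≤ c := mul_nonneg y.2.1 h2m.le
      have hA' : ((⌈c⌉.toNat : ℕ) : ℝ) = ((⌈c⌉ : ℤ) : ℝ) := by
        exact_mod_cast congrArg (fun z : ℤ => (z : ℝ))
          (Int.toNat_of_nonneg (Int.ceil_nonneg hc0))
      refine ⟨⌈c⌉.toNat, ?_, ?_⟩
      · constructor
        · have h1 : (((⌈c⌉.toNat : ℕ) : ℝ) - 1) / 2^m < (y:ℝ) := by
            rw [div_lt_iff₀ h2m, hA']
            have := Int.ceil_lt_add_one c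
            linarith
          exact h1
        · show (y:ℝ) ≤ ((⌈c⌉.toNat : ℕ) : ℝ) / 2^m
          rw [le_div_iff₀ h2m, hA']
          exact Int.le_ceil c
      · intro t ht
        obtain ⟨ht1, ht2⟩ := ht
        set A : ℝ := ((⌈c⌉.toNat : ℕ) : ℝ)
        have hF1 : A - 1 < c := by rw [hA']; have := Int.ceil_lt_add_one c; linarith
        have hF2 : c ≤ A := by rw [hA']; exact Int.le_ceil c
        have hhalf : (1/2:ℝ)^m = 1/2^m := by rw [div_pow, one_pow]
        have hsub : (A - 1)/2^m = A/2^m - 1/2^m := by ring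
        have hy2 : (y:ℝ) ≤ A/2^m := by rw [le_div_iff₀ h2m]; exact hF2
        have hy3 : A/2^m < (y:ℝ) + 1/2^m := by
          rw [div_lt_iff₀ h2m, add_mul, one_div, inv_mul_cancel₀ h2m.ne']
          linarith
        exact ⟨by rw [hhalf]; linarith, by rw [hhalf]; linarith⟩
    have hJm : ∀ m, 2 * ν x {y} ≤ ν x (J m) := by
      intro m
      obtain ⟨j, hj1, hj2⟩ := hmem m
      exact (hGy m j hj1).trans (measure_mono hj2)
    have htends := tendsto_measure_iInter_atTop (μ := ν x)
      (fun m => (hJmeas m).nullMeasurableSet) hJanti ⟨0, measure_ne_top _ _⟩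
    rw [hJinter] at htends
    have h2p : 2 * ν x {y} ≤ ν x {y} :=
      ge_of_tendsto htends (Eventually.of_forall hJm)
    rcases eq_or_ne (ν x {y}) 0 with h | h
    · exact h
    · exfalso
      have h1 : (2:ℝ≥0∞) * ν x {y} ≤ 1 * ν x {y} := by rwa [one_mul]
      have := (ENNReal.mul_le_mul_iff_left h (measure_ne_top _ _)).mp h1
      norm_num at this
  · have h0 : ν x {y' | ¬ ∀ m j : ℕ, y' ∈ Iset m j → 2 * ν x {y'} ≤ ν x (Iset m j)} = 0 :=
      ae_iff.mp hae2
    have hle : ν x {y} ≤ 0 := h0 ▸ measure_mono (Set.singleton_subset_iff.2 hGy)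
    exact le_antisymm hle zero_le
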